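/- arXiv:2510.11659 — 3 statements merged into one kernel-verified Lean document; each statement's English description precedes it below -/
import Mathlib

section
/- Parallel growths of strictly positive quantity vectors implies equality of compositional differences of the associated shares: if log q_{1,1} - log q_{1,0} = log q_{0,1} - log q_{0,0} componentwise, then π_{1,1} ⊖ π_{1,0} = π_{0,1} ⊖ π_{0,0}, where π_{g,t} is the normalization of q_{g,t} and ⊖ is the normalized componentwise ratio. -/
/-- The share vector of a positive quantity vector. -/
noncomputable def share {p : ℕ} (q : Fin p → ℝ) : Fin p → ℝ :=
  fun k => q k / ∑ j, q j

/-- Compositional difference: normalized componentwise ratio. -/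
noncomputable def codiff {p : ℕ} (π₁ π₂ : Fin p → ℝ) : Fin p → ℝ :=
  fun k => (π₁ k / π₂ k) / ∑ j, π₁ j / π₂ j

lemma share_ratio {p : ℕ} (q1 q2 : Fin p → ℝ)
    (h1 : ∀ k, 0 < q1 k) (h2 : ∀ k, 0 < q2 k) (hp : 0 < p) (k : Fin p) :
    share q1 k / share q2 k = (q1 k / q2 k) * ((∑ j, q2 j) / (∑ j, q1 j)) := by
  have hs1 : (0:ℝ) < ∑ j, q1 j :=
    Finset.sum_pos (fun j _ => h1 j) (by simpa using Finset.univ_nonempty_iff.mpr ⟨⟨0, hp⟩⟩)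
  have hs2 : (0:ℝ) < ∑ j, q2 j :=
    Finset.sum_pos (fun j _ => h2 j) (by simpa using Finset.univ_nonempty_iff.mpr ⟨⟨0, hp⟩⟩)
  unfold share
  field_simp

lemma codiff_share {p : ℕ} (q1 q2 : Fin p → ℝ)
    (h1 : ∀ k, 0 < q1 k) (h2 : ∀ k, 0 < q2 k) (hp : 0 < p) (k : Fin p) :
    codiff (share q1) (share q2) k = (q1 k / q2 k) / ∑ j, q1 j / q2 j := by
  have hs1 : (0:ℝ) < ∑ j, q1 j :=
    Finset.sum_pos (fun j _ => h1 j) (by simpa using Finset.univ_nonempty_iff.mpr ⟨⟨0, hp⟩⟩)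
  have hs2 : (0:ℝ) < ∑ j, q2 j :=
    Finset.sum_pos (fun j _ => h2 j) (by simpa using Finset.univ_nonempty_iff.mpr ⟨⟨0, hp⟩⟩)
  have hc : (0:ℝ) < (∑ j, q2 j) / (∑ j, q1 j) := div_pos hs2 hs1
  unfold codiff
  rw [share_ratio q1 q2 h1 h2 hp k]
  have hsum : (∑ j, share q1 j / share q2 j)
      = (∑ j, q1 j / q2 j) * ((∑ j, q2 j) / (∑ j, q1 j)) := by
    rw [Finset.sum_congr rfl fun j _ => share_ratio q1 q2 h1 h2 hp j,
      ← Finset.sum_mul]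
  rw [hsum, mul_div_mul_right _ _ (ne_of_gt hc)]

/-- Parallel growths of positive quantity vectors implies equality of
compositional differences of the associated shares. -/
theorem parallel_growths_implies_codiff_eq
    (p : ℕ)
    (q00 q01 q10 q11 : Fin p → ℝ)
    (h00 : ∀ k, 0 < q00 k) (h01 : ∀ k, 0 < q01 k)
    (h10 : ∀ k, 0 < q10 k) (h11 : ∀ k, 0 < q11 k)
    (hpg : ∀ k, Real.log (q11 k) - Real.log (q10 k)
              = Real.log (q01 k) - Real.log (q00 k)) :
    codiff (share q11) (share q10) = codiff (share q01) (share q00) := by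
  rcases Nat.eq_zero_or_pos p with hp | hp
  · subst hp; funext k; exact k.elim0
  have hr : ∀ k, q11 k / q10 k = q01 k / q00 k := by
    intro k
    have h1 : Real.log (q11 k / q10 k) = Real.log (q01 k / q00 k) := by
      rw [Real.log_div (ne_of_gt (h11 k)) (ne_of_gt (h10 k)),
        Real.log_div (ne_of_gt (h01 k)) (ne_of_gt (h00 k))]
      exact hpg k
    exact Real.log_injOn_pos.eq_iff (Set.mem_Ioi.mpr (div_pos (h11 k) (h10 k)))
      (Set.mem_Ioi.mpr (div_pos (h01 k) (h00 k))) |>.mp h1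
  funext k
  rw [codiff_share q11 q10 h11 h10 hp k, codiff_share q01 q00 h01 h00 hp k, hr k]
  congr 1
  exact Finset.sum_congr rfl fun j _ => hr j
end

section
/- Equality of compositional differences is equivalent to parallel trends in log-odds: for π_{g,t} in the open simplex, π_{1,1} ⊖ π_{0,1} = π_{1,0} ⊖ π_{0,0} holds if and only if for every k = 1,...,p-1, log(π_{1,1}(k)/π_{1,1}(p)) - log(π_{0,1}(k)/π_{0,1}(p)) = log(π_{1,0}(k)/π_{1,0}(p)) - log(π_{0,0}(k)/π_{0,0}(p)). -/
/-- Equality of compositional differences is equivalent to parallel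
trends in log-odds (with the last category as baseline). -/
theorem codiff_eq_iff_parallel_logodds
    (p : ℕ)
    (π00 π01 π10 π11 : Fin (p + 1) → ℝ)
    (h00 : (∀ k, 0 < π00 k) ∧ ∑ k, π00 k = 1)
    (h01 : (∀ k, 0 < π01 k) ∧ ∑ k, π01 k = 1)
    (h10 : (∀ k, 0 < π10 k) ∧ ∑ k, π10 k = 1)
    (h11 : (∀ k, 0 < π11 k) ∧ ∑ k, π11 k = 1) :
    codiff π11 π01 = codiff π10 π00 ↔
      ∀ k : Fin p,
        Real.log (π11 k.castSucc / π11 (Fin.last p))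
          - Real.log (π01 k.castSucc / π01 (Fin.last p))
        = Real.log (π10 k.castSucc / π10 (Fin.last p))
          - Real.log (π00 k.castSucc / π00 (Fin.last p)) := by
  set r : Fin (p + 1) → ℝ := fun k => π11 k / π01 k with hrdef
  set s : Fin (p + 1) → ℝ := fun k => π10 k / π00 k with hsdef
  have hr : ∀ k, 0 < r k := fun k => div_pos (h11.1 k) (h01.1 k)
  have hs : ∀ k, 0 < s k := fun k => div_pos (h10.1 k) (h00.1 k)
  have hS : 0 < ∑ j, r j := Finset.sum_pos (fun j _ => hr j) Finset.univ_nonempty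
  have hT : 0 < ∑ j, s j := Finset.sum_pos (fun j _ => hs j) Finset.univ_nonempty
  -- log difference lemma
  have logdiff : ∀ (f g : Fin (p + 1) → ℝ), (∀ k, 0 < f k) → (∀ k, 0 < g k) →
      ∀ i j : Fin (p + 1),
      Real.log (f i / f j) - Real.log (g i / g j)
        = Real.log ((f i / g i) / (f j / g j)) := by
    intro f g hf hg i j
    rw [Real.log_div (ne_of_gt (hf i)) (ne_of_gt (hf j)),
        Real.log_div (ne_of_gt (hg i)) (ne_of_gt (hg j)),
        Real.log_div (ne_of_gt (div_pos (hf i) (hg i)))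
          (ne_of_gt (div_pos (hf j) (hg j))),
        Real.log_div (ne_of_gt (hf i)) (ne_of_gt (hg i)),
        Real.log_div (ne_of_gt (hf j)) (ne_of_gt (hg j))]
    ring
  -- key ratio condition
  have key : codiff π11 π01 = codiff π10 π00 ↔
      ∀ k : Fin (p + 1), r k / r (Fin.last p) = s k / s (Fin.last p) := by
    constructor
    · intro h k
      have h1 : r k / (∑ j, r j) = s k / (∑ j, s j) := congrFun h k
      have h2 : r (Fin.last p) / (∑ j, r j) = s (Fin.last p) / (∑ j, s j) :=
        congrFun h (Fin.last p)
      rw [div_eq_div_iff (ne_of_gt hS) (ne_of_gt hT)] at h1 h2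
      rw [div_eq_div_iff (ne_of_gt (hr _)) (ne_of_gt (hs _))]
      have hgoal : r k * s (Fin.last p) * (∑ j, s j)
          = s k * r (Fin.last p) * (∑ j, s j) := by
        linear_combination s (Fin.last p) * h1 - s k * h2
      exact mul_right_cancel₀ (ne_of_gt hT) hgoal
    · intro h
      have hc : ∀ k, r k * s (Fin.last p) = s k * r (Fin.last p) := by
        intro k
        have := h k
        rwa [div_eq_div_iff (ne_of_gt (hr _)) (ne_of_gt (hs _))] at this
      have hsum : (∑ j, r j) * s (Fin.last p) = (∑ j, s j) * r (Fin.last p) := by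
        rw [Finset.sum_mul, Finset.sum_mul]
        exact Finset.sum_congr rfl fun j _ => hc j
      funext k
      show r k / (∑ j, r j) = s k / (∑ j, s j)
      rw [div_eq_div_iff (ne_of_gt hS) (ne_of_gt hT)]
      have hgoal : r k * (∑ j, s j) * s (Fin.last p)
          = s k * (∑ j, r j) * s (Fin.last p) := by
        linear_combination (∑ j, s j) * hc k - s k * hsum
      exact mul_right_cancel₀ (ne_of_gt (hs _)) hgoal
  rw [key]
  have logeq : ∀ k : Fin p,
      (Real.log (π11 k.castSucc / π11 (Fin.last p))
          - Real.log (π01 k.castSucc / π01 (Fin.last p))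
        = Real.log (π10 k.castSucc / π10 (Fin.last p))
          - Real.log (π00 k.castSucc / π00 (Fin.last p)))
      ↔ r k.castSucc / r (Fin.last p) = s k.castSucc / s (Fin.last p) := by
    intro k
    rw [logdiff π11 π01 h11.1 h01.1, logdiff π10 π00 h10.1 h00.1]
    constructor
    · intro hl
      exact Real.log_injOn_pos
        (Set.mem_Ioi.mpr (div_pos (hr _) (hr _)))
        (Set.mem_Ioi.mpr (div_pos (hs _) (hs _))) hl
    · intro he; rw [he]
  constructor
  · intro h k
    exact (logeq k).mpr (h k.castSucc)
  · intro h k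
    induction k using Fin.lastCases with
    | last => rw [div_self (ne_of_gt (hr _)), div_self (ne_of_gt (hs _))]
    | cast i => exact (logeq i).mp (h i)
end

section
/- Under parallel growths, the counterfactual share vector satisfies π_{1,1} = ℓ^{-1}(ℓ(π_{1,0}) + ℓ(π_{0,1}) - ℓ(π_{0,0})), where ℓ is the log-odds transform with baseline category p and ℓ^{-1} the softmax inverse. -/
/-- Log-odds transform with baseline the last category. -/
noncomputable def logOdds {p : ℕ} (π : Fin (p + 1) → ℝ) : Fin p → ℝ :=
  fun k => Real.log (π k.castSucc / π (Fin.last p))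

/-- Softmax map `y ↦ (e^{y₁},…,e^{y_p},1)/(1+∑ e^{y_i})`. -/
noncomputable def softmax {p : ℕ} (y : Fin p → ℝ) : Fin (p + 1) → ℝ :=
  fun i => (Fin.lastCases 1 (fun k => Real.exp (y k)) i) / (1 + ∑ j, Real.exp (y j))

lemma div_div_same (a b S : ℝ) (hb : b ≠ 0) (hS : S ≠ 0) :
    (a / S) / (b / S) = a / b := by
  field_simp

lemma logOdds_share {p : ℕ} (q : Fin (p + 1) → ℝ) (hq : ∀ k, 0 < q k) :
    logOdds (share q) = fun k => Real.log (q k.castSucc / q (Fin.last p)) := by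
  have hS : 0 < ∑ j, q j := Finset.sum_pos (fun j _ => hq j) Finset.univ_nonempty
  funext k
  simp only [logOdds, share]
  rw [div_div_same _ _ _ (hq (Fin.last p)).ne' hS.ne']

lemma share_eq_softmax {p : ℕ} (q : Fin (p + 1) → ℝ) (hq : ∀ k, 0 < q k) :
    share q = softmax (fun k => Real.log (q k.castSucc / q (Fin.last p))) := by
  have hlast : 0 < q (Fin.last p) := hq _
  have he : ∀ k : Fin p, Real.exp (Real.log (q k.castSucc / q (Fin.last p)))
      = q k.castSucc / q (Fin.last p) := fun k =>
    Real.exp_log (div_pos (hq _) hlast)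
  funext i
  simp only [softmax, he]
  have hsum : (1 + ∑ j : Fin p, q j.castSucc / q (Fin.last p))
      = (∑ j, q j) / q (Fin.last p) := by
    rw [← Finset.sum_div, Fin.sum_univ_castSucc, add_div, div_self hlast.ne', add_comm]
  rw [hsum]
  induction i using Fin.lastCases with
  | last =>
    simp only [Fin.lastCases_last, share]
    rw [one_div_div]
  | cast k =>
    simp only [Fin.lastCases_castSucc, share]
    have hS : (∑ j, q j) ≠ 0 := (Finset.sum_pos (fun j _ => hq j) Finset.univ_nonempty).ne'
    rw [div_div_same _ _ _ hS hlast.ne']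

/-- Under parallel growths, the counterfactual share vector satisfies
`π₁₁ = ℓ⁻¹(ℓ(π₁₀) + ℓ(π₀₁) - ℓ(π₀₀))`. -/
theorem counterfactual_shares_via_logodds
    (p : ℕ)
    (q00 q01 q10 q11 : Fin (p + 1) → ℝ)
    (h00 : ∀ k, 0 < q00 k) (h01 : ∀ k, 0 < q01 k)
    (h10 : ∀ k, 0 < q10 k) (h11 : ∀ k, 0 < q11 k)
    (hpg : ∀ k, Real.log (q11 k) - Real.log (q10 k)
              = Real.log (q01 k) - Real.log (q00 k)) :
    share q11 = softmax (logOdds (share q10) + logOdds (share q01)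
      - logOdds (share q00)) := by
  rw [logOdds_share q10 h10, logOdds_share q01 h01, logOdds_share q00 h00,
    share_eq_softmax q11 h11]
  have harg : (fun k : Fin p => Real.log (q11 k.castSucc / q11 (Fin.last p)))
      = ((fun k : Fin p => Real.log (q10 k.castSucc / q10 (Fin.last p))) + fun k =>
          Real.log (q01 k.castSucc / q01 (Fin.last p))) -
        fun k => Real.log (q00 k.castSucc / q00 (Fin.last p)) := by
    funext k
    simp only [Pi.add_apply, Pi.sub_apply]
    rw [Real.log_div (h11 _).ne' (h11 _).ne', Real.log_div (h10 _).ne' (h10 _).ne',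
      Real.log_div (h01 _).ne' (h01 _).ne', Real.log_div (h00 _).ne' (h00 _).ne']
    have h1 := hpg k.castSucc
    have h2 := hpg (Fin.last p)
    linarith
  rw [harg]
end
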